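/- For every s > 0 and every r > 1/2, the continued fraction s + K_{n=1}^∞ (((2n−1)²r² − (r−1)²)/(2s)) equals 4r·(Γ((s+2r+1)/(4r))·Γ((s+4r−1)/(4r)))/(Γ((s+1)/(4r))·Γ((s+2r−1)/(4r))), where Γ is the Gamma function. -/

import Mathlib

open Filter Real

/-- Numerators of the convergents of a generalized continued fraction with
integer part `b₀`, partial numerators `a n` and partial denominators `b n` (for `n ≥ 1`). -/
noncomputable def cfNum (b₀ : ℝ) (a b : ℕ → ℝ) : ℕ → ℝ
  | 0 => b₀
  | 1 => b 1 * b₀ + a 1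
  | n + 2 => b (n + 2) * cfNum b₀ a b (n + 1) + a (n + 2) * cfNum b₀ a b n

/-- Denominators of the convergents of a generalized continued fraction. -/
noncomputable def cfDen (a b : ℕ → ℝ) : ℕ → ℝ
  | 0 => 1
  | 1 => b 1
  | n + 2 => b (n + 2) * cfDen a b (n + 1) + a (n + 2) * cfDen a b n

/-- `IsCFLimit b₀ a b L` means: the convergents of the generalized continued fraction
`b₀ + a 1 / (b 1 + a 2 / (b 2 + ⋯))` tend to `L`. -/
def IsCFLimit (b₀ : ℝ) (a b : ℕ → ℝ) (L : ℝ) : Prop :=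
  Filter.Tendsto (fun n => cfNum b₀ a b n / cfDen a b n) Filter.atTop (nhds L)

namespace RamB
noncomputable def aa (r : ℝ) (n : ℕ) : ℝ := (2 * (n : ℝ) - 1) ^ 2 * r ^ 2 - (r - 1) ^ 2
noncomputable def QQ (r s : ℝ) : ℕ → ℝ := cfDen (aa r) (fun _ => 2 * s)
noncomputable def cp (r : ℝ) : ℕ → ℝ
  | 0 => 1
  | n + 1 => cp r n * aa r (n + 1)
variable {r s : ℝ}
lemma aa_pos (hr : 1 / 2 < r) {n : ℕ} (hn : 1 ≤ n) : 0 < aa r n := by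
  have h1 : (1 : ℝ) ≤ (2 * (n : ℝ) - 1) := by
    have : (1 : ℝ) ≤ (n : ℝ) := by exact_mod_cast hn
    linarith
  have h2 : (1 : ℝ) ≤ (2 * (n : ℝ) - 1) ^ 2 := by nlinarith
  have : r ^ 2 ≤ (2 * (n : ℝ) - 1) ^ 2 * r ^ 2 := by nlinarith [sq_nonneg r]
  have hr2 : (r - 1) ^ 2 < r ^ 2 := by nlinarith
  unfold aa; linarith
lemma cp_pos (hr : 1 / 2 < r) (n : ℕ) : 0 < cp r n := by
  induction n with
  | zero => norm_num [cp]
  | succ n ih => exact mul_pos ih (aa_pos hr (Nat.succ_le_succ (Nat.zero_le n)))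
lemma QQ_zero : QQ r s 0 = 1 := rfl
lemma QQ_one : QQ r s 1 = 2 * s := rfl
lemma QQ_two (n : ℕ) : QQ r s (n + 2) = 2 * s * QQ r s (n + 1) + aa r (n + 2) * QQ r s n := rfl
lemma QQ_pos (hr : 1 / 2 < r) (hs : 0 < s) : ∀ n, 0 < QQ r s n := by
  have H : ∀ n, 0 < QQ r s n ∧ 0 < QQ r s (n + 1) := by
    intro n
    induction n with
    | zero => exact ⟨by rw [QQ_zero]; norm_num, by rw [QQ_one]; linarith⟩
    | succ n ih =>
      refine ⟨ih.2, ?_⟩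
      rw [QQ_two]
      have := aa_pos hr (n := n + 2) (by omega)
      nlinarith [ih.1, ih.2]
  exact fun n => (H n).1

/-- reciprocal of the alternating term -/
noncomputable def tt (r s : ℝ) (n : ℕ) : ℝ := QQ r s (n + 1) * QQ r s n / cp r (n + 1)

lemma tt_pos (hr : 1 / 2 < r) (hs : 0 < s) (n : ℕ) : 0 < tt r s n :=
  div_pos (mul_pos (QQ_pos hr hs _) (QQ_pos hr hs _)) (cp_pos hr _)

lemma aa_mono (hr : 1 / 2 < r) {m n : ℕ} (h : m ≤ n) (hm : 1 ≤ m) : aa r m ≤ aa r n := by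
  unfold aa
  have h1 : (1:ℝ) ≤ 2 * (m:ℝ) - 1 := by
    have : (1:ℝ) ≤ (m:ℝ) := by exact_mod_cast hm
    linarith
  have h2 : (2 * (m:ℝ) - 1) ≤ (2 * (n:ℝ) - 1) := by
    have : (m:ℝ) ≤ (n:ℝ) := by exact_mod_cast h
    linarith
  have h3 : (2 * (m:ℝ) - 1) ^ 2 ≤ (2 * (n:ℝ) - 1) ^ 2 := by nlinarith
  nlinarith [mul_le_mul_of_nonneg_right h3 (sq_nonneg r)]

lemma tt_step (hr : 1 / 2 < r) (hs : 0 < s) (n : ℕ) :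
    tt r s (n + 1) = tt r s n + 2 * s * QQ r s (n + 1) ^ 2 / cp r (n + 2) := by
  have hc1 := cp_pos hr (n + 1)
  have hc2 := cp_pos hr (n + 2)
  have ha := aa_pos hr (n := n + 2) (by omega)
  have hcp : cp r (n + 2) = cp r (n + 1) * aa r (n + 2) := rfl
  unfold tt
  rw [QQ_two, hcp]
  field_simp
  ring

lemma tt_mono (hr : 1 / 2 < r) (hs : 0 < s) : Monotone (tt r s) := by
  apply monotone_nat_of_le_succ
  intro n
  rw [tt_step hr hs]
  have : 0 ≤ 2 * s * QQ r s (n + 1) ^ 2 / cp r (n + 2) := by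
    apply div_nonneg _ (le_of_lt (cp_pos hr _))
    positivity
  linarith

/-- dichotomy : one of two consecutive ratios is large -/
lemma ratio_dichotomy (hr : 1 / 2 < r) (hs : 0 < s) (n : ℕ) :
    2 * r * (n + 1) * QQ r s n ≤ QQ r s (n + 1) ∨
      2 * r * (n + 1) * QQ r s (n + 1) ≤ QQ r s (n + 2) := by
  by_cases h : 2 * r * (n + 1) * QQ r s n ≤ QQ r s (n + 1)
  · exact Or.inl h
  right
  push_neg at h
  have hQn := QQ_pos hr hs n
  have hQn1 := QQ_pos hr hs (n + 1)
  have ha : 4 * r ^ 2 * ((n:ℝ) + 1) ^ 2 ≤ aa r (n + 2) := by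
    unfold aa
    push_cast
    nlinarith [sq_nonneg r, sq_nonneg ((n:ℝ)), (show (0:ℝ) ≤ (n:ℝ) from Nat.cast_nonneg n)]
  have hr0 : (0:ℝ) < 2 * r * (n + 1) := by positivity
  rw [QQ_two]
  -- QQ (n+2) ≥ aa (n+2) * QQ n ≥ 4r²(n+1)² QQ n ≥ 2r(n+1) * QQ(n+1)
  have h1 : aa r (n + 2) * QQ r s n ≥ 4 * r ^ 2 * ((n:ℝ) + 1) ^ 2 * QQ r s n := by
    nlinarith
  nlinarith [mul_pos hs hQn1]

/-- two-step additive growth of `tt` -/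
lemma tt_two_step (hr : 1 / 2 < r) (hs : 0 < s) (n : ℕ) :
    tt r s n + 4 * s * r * (n + 1) * tt r s 0 / aa r (n + 3) ≤ tt r s (n + 2) := by
  have ht0 : 0 < tt r s 0 := tt_pos hr hs 0
  have htn0 : tt r s 0 ≤ tt r s n := tt_mono hr hs (Nat.zero_le n)
  have ha3 := aa_pos hr (n := n + 3) (by omega)
  have key : ∀ m : ℕ, 2 * r * ((n:ℝ) + 1) * QQ r s m ≤ QQ r s (m + 1) →
      tt r s m + 4 * s * r * (n + 1) * tt r s 0 / aa r (m + 2) ≤ tt r s (m + 1) := by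
    intro m hm
    rw [tt_step hr hs]
    have hcp2 : cp r (m + 2) = cp r (m + 1) * aa r (m + 2) := rfl
    have hQm := QQ_pos hr hs m
    have hQm1 := QQ_pos hr hs (m + 1)
    have hc1 := cp_pos hr (m + 1)
    have ha2 := aa_pos hr (n := m + 2) (by omega)
    have h1 : 2 * r * ((n:ℝ) + 1) * (QQ r s (m + 1) * QQ r s m) ≤ QQ r s (m + 1) ^ 2 := by
      nlinarith
    have h2 : 4 * s * r * ((n:ℝ)+1) * tt r s m / aa r (m + 2)
        ≤ 2 * s * QQ r s (m + 1) ^ 2 / cp r (m + 2) := by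
      rw [hcp2, div_le_div_iff₀ (by positivity) (by positivity)]
      unfold tt
      rw [mul_assoc (4 * s * r * ((n:ℝ)+1))]
      have he : QQ r s (m + 1) * QQ r s m / cp r (m + 1) * (cp r (m + 1) * aa r (m + 2))
          = QQ r s (m + 1) * QQ r s m * aa r (m + 2) := by field_simp
      rw [he]
      nlinarith [mul_le_mul_of_nonneg_left h1 (le_of_lt hs), ha2, hs]
    have h3 : 4 * s * r * ((n:ℝ)+1) * tt r s 0 / aa r (m + 2)
        ≤ 4 * s * r * ((n:ℝ)+1) * tt r s m / aa r (m + 2) := by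
      have hms := tt_mono hr hs (Nat.zero_le m)
      gcongr
    linarith
  rcases ratio_dichotomy hr hs n with h | h
  · -- big step at n → n+1
    have := key n h
    have haa : aa r (n + 2) ≤ aa r (n + 3) := aa_mono hr (by omega) (by omega)
    have hmono := tt_mono hr hs (show n + 1 ≤ n + 2 by omega)
    have : 4 * s * r * ((n:ℝ)+1) * tt r s 0 / aa r (n + 3)
        ≤ 4 * s * r * ((n:ℝ)+1) * tt r s 0 / aa r (n + 2) := by
      gcongr
      exact aa_pos hr (by omega)
    push_cast at *
    linarith
  · -- big step at n+1 → n+2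
    have := key (n + 1) (by push_cast at h ⊢; linarith)
    have hmono := tt_mono hr hs (show n ≤ n + 1 by omega)
    push_cast at *
    linarith


lemma tt_harmonic (hr : 1 / 2 < r) (hs : 0 < s) (m : ℕ) :
    tt r s 0 + (4 * s * tt r s 0 / (49 * r)) * (∑ k ∈ Finset.range m, (1 : ℝ) / (k + 1))
      ≤ tt r s (2 * m) := by
  have ht0 := tt_pos hr hs 0
  have hrpos : (0:ℝ) < r := by linarith
  induction m with
  | zero => simp
  | succ m ih =>
    rw [Finset.sum_range_succ]
    have hstep := tt_two_step hr hs (2 * m)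
    have haux : (4 * s * tt r s 0 / (49 * r)) * ((1:ℝ) / (m + 1))
        ≤ 4 * s * r * (2 * (m:ℝ) + 1) * tt r s 0 / aa r (2 * m + 3) := by
      have haub : aa r (2 * m + 3) ≤ 49 * ((m:ℝ) + 1) ^ 2 * r ^ 2 := by
        unfold aa
        push_cast
        nlinarith [sq_nonneg (r - 1), sq_nonneg ((m:ℝ)), (Nat.cast_nonneg m : (0:ℝ) ≤ m), sq_nonneg r]
      have hapos := aa_pos hr (n := 2 * m + 3) (by omega)
      rw [div_mul_eq_mul_div, div_le_div_iff₀ (by positivity) hapos]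
      calc 4 * s * tt r s 0 * (1 / ((m:ℝ) + 1)) * aa r (2 * m + 3)
          ≤ 4 * s * tt r s 0 * (1 / ((m:ℝ) + 1)) * (49 * ((m:ℝ) + 1) ^ 2 * r ^ 2) := by
            gcongr
          _ = 4 * s * r * (((m:ℝ)) + 1) * tt r s 0 * (49 * r) := by
            field_simp
          _ ≤ 4 * s * r * (2 * (m:ℝ) + 1) * tt r s 0 * (49 * r) := by
            gcongr
            linarith [Nat.cast_nonneg (α := ℝ) m]
      done
    have h2 : 2 * (m + 1) = 2 * m + 2 := by omega
    rw [h2]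
    push_cast at haux hstep ⊢
    linarith [hstep, ih, haux]

lemma tt_tendsto (hr : 1 / 2 < r) (hs : 0 < s) : Tendsto (tt r s) atTop atTop := by
  have ht0 := tt_pos hr hs 0
  have hrpos : (0:ℝ) < r := by linarith
  have hD : (0:ℝ) < 4 * s * tt r s 0 / (49 * r) := by positivity
  have hH : Tendsto (fun m : ℕ => ∑ k ∈ Finset.range m, (1 : ℝ) / (k + 1)) atTop atTop := by
    simpa using Real.tendsto_sum_range_one_div_nat_succ_atTop
  have h1 : Tendsto (fun m : ℕ => tt r s 0 +
      (4 * s * tt r s 0 / (49 * r)) * (∑ k ∈ Finset.range m, (1 : ℝ) / (k + 1))) atTop atTop :=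
    tendsto_atTop_add_const_left _ _ (hH.const_mul_atTop hD)
  have h2 : Tendsto (fun m : ℕ => tt r s (2 * m)) atTop atTop :=
    tendsto_atTop_mono (fun m => tt_harmonic hr hs m) h1
  apply tendsto_atTop_atTop_of_monotone (tt_mono hr hs)
  intro b
  rcases (tendsto_atTop.mp h2 b).exists with ⟨m, hm⟩
  exact ⟨2 * m, hm⟩

/-- alternating term -/
noncomputable def uu (r s : ℝ) (n : ℕ) : ℝ := (tt r s n)⁻¹

lemma uu_eq (n : ℕ) : uu r s n = cp r (n + 1) / (QQ r s (n + 1) * QQ r s n) := by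
  unfold uu tt; rw [inv_div]

lemma uu_anti (hr : 1 / 2 < r) (hs : 0 < s) : Antitone (uu r s) := by
  intro m n h
  exact inv_anti₀ (tt_pos hr hs m) (tt_mono hr hs h)

lemma uu_tendsto (hr : 1 / 2 < r) (hs : 0 < s) : Tendsto (uu r s) atTop (nhds 0) :=
  (tt_tendsto hr hs).inv_tendsto_atTop

lemma uu_zero (hs : 0 < s) : uu r s 0 = aa r 1 / (2 * s) := by
  rw [uu_eq, QQ_one, QQ_zero]
  show cp r 0 * aa r 1 / (2 * s * 1) = _
  rw [show cp r 0 = 1 from rfl]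
  ring


noncomputable def PP (r s : ℝ) : ℕ → ℝ := cfNum s (aa r) (fun _ => 2 * s)

variable {r s : ℝ}

lemma PP_zero : PP r s 0 = s := rfl
lemma PP_one : PP r s 1 = 2 * s * s + aa r 1 := rfl
lemma PP_two (n : ℕ) : PP r s (n + 2) = 2 * s * PP r s (n + 1) + aa r (n + 2) * PP r s n := rfl

lemma det_id (n : ℕ) :
    PP r s (n + 1) * QQ r s n - PP r s n * QQ r s (n + 1) = (-1) ^ n * cp r (n + 1) := by
  induction n with
  | zero =>
    rw [PP_one, PP_zero, QQ_zero, QQ_one]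
    show _ = _ * (cp r 0 * aa r 1)
    rw [show cp r 0 = (1:ℝ) from rfl]; ring
  | succ n ih =>
    rw [PP_two, QQ_two]
    have hc : cp r (n + 2) = cp r (n + 1) * aa r (n + 2) := rfl
    rw [hc]
    calc (2 * s * PP r s (n + 1) + aa r (n + 2) * PP r s n) * QQ r s (n + 1) -
          PP r s (n + 1) * (2 * s * QQ r s (n + 1) + aa r (n + 2) * QQ r s n)
        = -(aa r (n + 2)) * (PP r s (n + 1) * QQ r s n - PP r s n * QQ r s (n + 1)) := by ring
      _ = -(aa r (n + 2)) * ((-1) ^ n * cp r (n + 1)) := by rw [ih]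
      _ = (-1) ^ (n + 1) * (cp r (n + 1) * aa r (n + 2)) := by ring

lemma diff_id (hr : 1 / 2 < r) (hs : 0 < s) (n : ℕ) :
    PP r s (n + 1) / QQ r s (n + 1) - PP r s n / QQ r s n
      = (-1) ^ n * uu r s n := by
  have h0 := QQ_pos hr hs n
  have h1 := QQ_pos hr hs (n + 1)
  rw [uu_eq]
  field_simp
  linarith [det_id (r := r) (s := s) n]

lemma conv_partial (hr : 1 / 2 < r) (hs : 0 < s) (n : ℕ) :
    PP r s n / QQ r s n = s + ∑ i ∈ Finset.range n, (-1) ^ i * uu r s i := by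
  induction n with
  | zero => simp [PP_zero, QQ_zero]
  | succ n ih =>
    rw [Finset.sum_range_succ, ← add_assoc, ← ih, ← diff_id hr hs n]
    ring

lemma conv_exists (hr : 1 / 2 < r) (hs : 0 < s) :
    ∃ L, Tendsto (fun n => PP r s n / QQ r s n) atTop (nhds L) ∧
      s ≤ L ∧ L ≤ s + aa r 1 / (2 * s) := by
  obtain ⟨l, hl⟩ := (uu_anti hr hs).tendsto_alternating_series_of_tendsto_zero
      (uu_tendsto hr hs)
  refine ⟨s + l, ?_, ?_, ?_⟩
  · have : (fun n => PP r s n / QQ r s n)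
        = (fun n => s + ∑ i ∈ Finset.range n, (-1) ^ i * uu r s i) := by
      funext n; exact conv_partial hr hs n
    rw [this]
    exact (tendsto_const_nhds).add hl
  · have h0 : (0:ℝ) ≤ l := by
      have := (uu_anti hr hs).alternating_series_le_tendsto hl 0
      simpa using this
    linarith
  · have h1 : l ≤ uu r s 0 := by
      have := (uu_anti hr hs).tendsto_le_alternating_series hl 0
      simpa using this
    rw [← uu_zero hs]
    linarith


/-- The key Ramanujan identity system, by joint induction. -/
lemma magic (r s : ℝ) : ∀ n : ℕ,
    (PP r s n * PP r (s + 2*r) n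
        - (s+1)*(s+2*r-1) * (QQ r s n * QQ r (s + 2*r) n) = (-1)^(n+1) * cp r (n+1))
  ∧ (PP r s (n+1) * PP r (s + 2*r) (n+1)
        - (s+1)*(s+2*r-1) * (QQ r s (n+1) * QQ r (s + 2*r) (n+1)) = (-1)^(n+2) * cp r (n+2))
  ∧ (PP r s (n+1) * PP r (s + 2*r) n
        - (s+1)*(s+2*r-1) * (QQ r s (n+1) * QQ r (s + 2*r) n)
        = (-1)^n * (2*r*((n:ℝ)+1) - s) * cp r (n+1))
  ∧ (PP r s n * PP r (s + 2*r) (n+1)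
        - (s+1)*(s+2*r-1) * (QQ r s n * QQ r (s + 2*r) (n+1))
        = (-1)^(n+1) * (s + 2*r*((n:ℝ)+2)) * cp r (n+1)) := by
  have hc1 : cp r 1 = aa r 1 := by
    rw [show cp r 1 = cp r 0 * aa r 1 from rfl, show cp r 0 = (1:ℝ) from rfl, one_mul]
  have hc2 : cp r 2 = aa r 1 * aa r 2 := by
    rw [show cp r 2 = cp r 1 * aa r 2 from rfl, hc1]
  intro n
  induction n with
  | zero =>
    refine ⟨?_, ?_, ?_, ?_⟩ <;>
    · norm_num [PP_zero, PP_one, QQ_zero, QQ_one, hc1, hc2, aa]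
      ring
  | succ n ih =>
    obtain ⟨h1, h2, h3, h4⟩ := ih
    have hcp2 : cp r (n+2) = cp r (n+1) * aa r (n+2) := rfl
    have hcp3 : cp r (n+3) = cp r (n+1) * (aa r (n+2) * aa r (n+3)) := by
      rw [show cp r (n+3) = cp r (n+2) * aa r (n+3) from rfl, hcp2]; ring
    have haa2 : aa r (n+2) = (2*((n:ℝ)+2) - 1)^2 * r^2 - (r-1)^2 := by
      unfold aa; push_cast; ring
    have haa3 : aa r (n+3) = (2*((n:ℝ)+3) - 1)^2 * r^2 - (r-1)^2 := by
      unfold aa; push_cast; ring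
    rw [hcp2, haa2] at h2
    refine ⟨?_, ?_, ?_, ?_⟩
    · -- E (n+1) : this is h2
      rw [show (n:ℕ)+1+1 = n+2 from rfl, hcp2, haa2]
      simp only [pow_succ] at h2 ⊢
      linear_combination h2
    · -- E (n+2)
      rw [PP_two, PP_two, QQ_two, QQ_two, show (n:ℕ)+1+2 = n+3 from rfl, hcp3, haa2, haa3]
      simp only [pow_succ] at h1 h2 h3 h4 ⊢
      push_cast at h1 h2 h3 h4 ⊢
      linear_combination (2*s)*(2*(s+2*r))*h2
        + ((2*((n:ℝ)+2) - 1)^2 * r^2 - (r-1)^2)*(2*s)*h3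
        + ((2*((n:ℝ)+2) - 1)^2 * r^2 - (r-1)^2)*(2*(s+2*r))*h4
        + ((2*((n:ℝ)+2) - 1)^2 * r^2 - (r-1)^2)^2*h1
    · -- D (n+2)
      rw [PP_two, QQ_two, show (n:ℕ)+1+1 = n+2 from rfl, hcp2, haa2]
      simp only [pow_succ] at h1 h2 h3 h4 ⊢
      push_cast at h1 h2 h3 h4 ⊢
      linear_combination (2*s)*h2 + ((2*((n:ℝ)+2) - 1)^2 * r^2 - (r-1)^2)*h4
    · -- D̃ (n+2)
      rw [PP_two (s := s + 2*r), QQ_two (s := s + 2*r),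
        show (n:ℕ)+1+1 = n+2 from rfl, hcp2, haa2]
      simp only [pow_succ] at h1 h2 h3 h4 ⊢
      push_cast at h1 h2 h3 h4 ⊢
      linear_combination (2*(s+2*r))*h2 + ((2*((n:ℝ)+2) - 1)^2 * r^2 - (r-1)^2)*h3


/-- The value of the continued fraction. -/
noncomputable def ylim (r s : ℝ) : ℝ := limUnder atTop (fun n => PP r s n / QQ r s n)

lemma ylim_spec (hr : 1 / 2 < r) (hs : 0 < s) :
    Tendsto (fun n => PP r s n / QQ r s n) atTop (nhds (ylim r s)) ∧
      s ≤ ylim r s ∧ ylim r s ≤ s + aa r 1 / (2 * s) := by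
  obtain ⟨L, hL, h1, h2⟩ := conv_exists hr hs
  have : ylim r s = L := hL.limUnder_eq
  rw [this]
  exact ⟨hL, h1, h2⟩

lemma ylim_pos (hr : 1 / 2 < r) (hs : 0 < s) : 0 < ylim r s :=
  lt_of_lt_of_le hs (ylim_spec hr hs).2.1

lemma ylim_funct_eq (hr : 1 / 2 < r) (hs : 0 < s) :
    ylim r s * ylim r (s + 2 * r) = (s + 1) * (s + 2 * r - 1) := by
  have hs' : 0 < s + 2 * r := by linarith
  have hy := (ylim_spec hr hs).1
  have hy' := (ylim_spec (s := s + 2 * r) hr hs').1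
  have hgt : Tendsto
      (fun n => PP r s n / QQ r s n * (PP r (s + 2*r) n / QQ r (s + 2*r) n)
        - (s + 1) * (s + 2 * r - 1)) atTop
      (nhds (ylim r s * ylim r (s + 2 * r) - (s + 1) * (s + 2 * r - 1))) :=
    (hy.mul hy').sub tendsto_const_nhds
  have hsign : (fun n => PP r s n / QQ r s n * (PP r (s + 2*r) n / QQ r (s + 2*r) n)
        - (s + 1) * (s + 2 * r - 1))
      = fun n => (-1)^(n+1) * (cp r (n+1) / (QQ r s n * QQ r (s + 2*r) n)) := by
    funext n
    have hQ := (QQ_pos hr hs n).ne'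
    have hQ' := (QQ_pos hr hs' n).ne'
    have hm := (magic r s n).1
    field_simp
    linear_combination hm
  rw [hsign] at hgt
  have hcpQ : ∀ n, 0 < cp r (n+1) / (QQ r s n * QQ r (s + 2*r) n) := fun n =>
    div_pos (cp_pos hr _) (mul_pos (QQ_pos hr hs n) (QQ_pos hr hs' n))
  have heven : ∀ n, (-1:ℝ)^(2*n+1) * (cp r (2*n+1) / (QQ r s (2*n) * QQ r (s + 2*r) (2*n))) ≤ 0 := by
    intro n
    have h1 : ((-1:ℝ))^(2*n+1) = -1 := by rw [pow_succ, pow_mul]; norm_num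
    rw [h1]
    nlinarith [hcpQ (2*n)]
  have hodd : ∀ n, 0 ≤ (-1:ℝ)^(2*n+1+1) * (cp r (2*n+1+1) / (QQ r s (2*n+1) * QQ r (s + 2*r) (2*n+1))) := by
    intro n
    have h1 : ((-1:ℝ))^(2*n+1+1) = 1 := by rw [pow_succ, pow_succ, pow_mul]; norm_num
    rw [h1]
    nlinarith [hcpQ (2*n+1)]
  have hge : Tendsto (fun n => (-1:ℝ)^(2*n+1) * (cp r (2*n+1) / (QQ r s (2*n) * QQ r (s + 2*r) (2*n))))
      atTop (nhds (ylim r s * ylim r (s + 2 * r) - (s + 1) * (s + 2 * r - 1))) :=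
    hgt.comp (tendsto_atTop_mono (fun n => by dsimp; omega) tendsto_id)
  have hgo : Tendsto (fun n => (-1:ℝ)^(2*n+1+1) * (cp r (2*n+1+1) / (QQ r s (2*n+1) * QQ r (s + 2*r) (2*n+1))))
      atTop (nhds (ylim r s * ylim r (s + 2 * r) - (s + 1) * (s + 2 * r - 1))) :=
    hgt.comp (tendsto_atTop_mono (fun n => by dsimp; omega) tendsto_id)
  have hle : ylim r s * ylim r (s + 2 * r) - (s + 1) * (s + 2 * r - 1) ≤ 0 :=
    le_of_tendsto hge (Filter.Eventually.of_forall heven)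
  have hge0 : 0 ≤ ylim r s * ylim r (s + 2 * r) - (s + 1) * (s + 2 * r - 1) :=
    ge_of_tendsto hgo (Filter.Eventually.of_forall hodd)
  linarith


/-- The Gamma-quotient side. -/
noncomputable def Rf (r x : ℝ) : ℝ :=
  4 * r * (Real.Gamma ((x + 2*r + 1) / (4*r)) * Real.Gamma ((x + 4*r - 1) / (4*r))) /
    (Real.Gamma ((x + 1) / (4*r)) * Real.Gamma ((x + 2*r - 1) / (4*r)))

lemma Rf_pos {x : ℝ} (hr : 1 / 2 < r) (hx : 0 < x) : 0 < Rf r x := by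
  have h4r : (0:ℝ) < 4 * r := by linarith
  have h1 : 0 < Real.Gamma ((x + 2*r + 1) / (4*r)) :=
    Real.Gamma_pos_of_pos (div_pos (by linarith) h4r)
  have h2 : 0 < Real.Gamma ((x + 4*r - 1) / (4*r)) :=
    Real.Gamma_pos_of_pos (div_pos (by linarith) h4r)
  have h3 : 0 < Real.Gamma ((x + 1) / (4*r)) :=
    Real.Gamma_pos_of_pos (div_pos (by linarith) h4r)
  have h4 : 0 < Real.Gamma ((x + 2*r - 1) / (4*r)) :=
    Real.Gamma_pos_of_pos (div_pos (by linarith) h4r)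
  exact div_pos (by positivity) (by positivity)

lemma Rf_funct_eq {x : ℝ} (hr : 1 / 2 < r) (hx : 0 < x) :
    Rf r x * Rf r (x + 2*r) = (x + 1) * (x + 2*r - 1) := by
  have h4r : (0:ℝ) < 4 * r := by linarith
  have h4r' : (4*r : ℝ) ≠ 0 := h4r.ne'
  set u := (x + 1) / (4*r) with hu
  set v := (x + 2*r - 1) / (4*r) with hv
  have hupos : 0 < u := div_pos (by linarith) h4r
  have hvpos : 0 < v := div_pos (by linarith) h4r
  have e1 : (x + 2*r + 1) / (4*r) = u + 1/2 := by rw [hu]; field_simp; ring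
  have e2 : (x + 4*r - 1) / (4*r) = v + 1/2 := by rw [hv]; field_simp; ring
  have e3 : (x + 2*r + 2*r + 1) / (4*r) = u + 1 := by rw [hu]; field_simp; ring
  have e4 : (x + 2*r + 4*r - 1) / (4*r) = v + 1 := by rw [hv]; field_simp; ring
  have e5 : (x + 2*r + 1) / (4*r) = u + 1/2 := e1
  have e6 : (x + 2*r + 2*r - 1) / (4*r) = v + 1/2 := by rw [hv]; field_simp; ring
  unfold Rf
  rw [e1, e2, e3, e4, e6, Real.Gamma_add_one hupos.ne', Real.Gamma_add_one hvpos.ne']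
  rw [← hu, ← hv]
  have g1 : 0 < Real.Gamma u := Real.Gamma_pos_of_pos hupos
  have g2 : 0 < Real.Gamma v := Real.Gamma_pos_of_pos hvpos
  have g3 : 0 < Real.Gamma (u + 1/2) := Real.Gamma_pos_of_pos (by linarith)
  have g4 : 0 < Real.Gamma (v + 1/2) := Real.Gamma_pos_of_pos (by linarith)
  have huv : (x + 1) * (x + 2*r - 1) = 16 * r^2 * u * v := by
    rw [hu, hv]; field_simp; ring
  rw [huv]
  field_simp
  ring


lemma gammaSeq_pos {w : ℝ} (hw : 0 < w) (n : ℕ) (hn : 1 ≤ n) : 0 < Real.GammaSeq w n := by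
  unfold Real.GammaSeq
  have h1 : (0:ℝ) < (n:ℝ) ^ w := Real.rpow_pos_of_pos (by exact_mod_cast hn) w
  have h2 : (0:ℝ) < (n.factorial : ℝ) := by exact_mod_cast n.factorial_pos
  have h3 : (0:ℝ) < ∏ j ∈ Finset.range (n + 1), (w + j) := by
    apply Finset.prod_pos
    intro j _
    positivity
  positivity

lemma gammaSeq_half_ratio {w : ℝ} (hw : 0 < w) (n : ℕ) (hn : 1 ≤ n) :
    Real.GammaSeq (w + 1/2) n / Real.GammaSeq w n
      = (n:ℝ) ^ ((1:ℝ)/2) * (∏ j ∈ Finset.range (n + 1), (w + j))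
        / (∏ j ∈ Finset.range (n + 1), (w + 1/2 + j)) := by
  have hn0 : (0:ℝ) < (n:ℝ) := by exact_mod_cast hn
  have hA : (0:ℝ) < ∏ j ∈ Finset.range (n + 1), (w + j) := by
    apply Finset.prod_pos; intro j _; positivity
  have hA' : (0:ℝ) < ∏ j ∈ Finset.range (n + 1), (w + 1/2 + j) := by
    apply Finset.prod_pos; intro j _; positivity
  have hF : (0:ℝ) < (n.factorial : ℝ) := by exact_mod_cast n.factorial_pos
  have hnw : (0:ℝ) < (n:ℝ) ^ w := Real.rpow_pos_of_pos hn0 w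
  have hnh : (0:ℝ) < (n:ℝ) ^ ((1:ℝ)/2) := Real.rpow_pos_of_pos hn0 _
  unfold Real.GammaSeq
  rw [Real.rpow_add hn0]
  field_simp

lemma gamma_ratio_lim {u v : ℝ} (hu : 0 < u) (hv : 0 < v) :
    Tendsto (fun n : ℕ => (n:ℝ) * ∏ j ∈ Finset.range (n+1),
        ((u + j) * (v + j) / ((u + 1/2 + j) * (v + 1/2 + j)))) atTop
      (nhds (Real.Gamma (u+1/2) * Real.Gamma (v+1/2) / (Real.Gamma u * Real.Gamma v))) := by
  have hGu : 0 < Real.Gamma u := Real.Gamma_pos_of_pos hu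
  have hGv : 0 < Real.Gamma v := Real.Gamma_pos_of_pos hv
  have hG : Tendsto (fun n => Real.GammaSeq (u+1/2) n * Real.GammaSeq (v+1/2) n
      / (Real.GammaSeq u n * Real.GammaSeq v n)) atTop
      (nhds (Real.Gamma (u+1/2) * Real.Gamma (v+1/2) / (Real.Gamma u * Real.Gamma v))) :=
    ((Real.GammaSeq_tendsto_Gamma _).mul (Real.GammaSeq_tendsto_Gamma _)).div
      ((Real.GammaSeq_tendsto_Gamma u).mul (Real.GammaSeq_tendsto_Gamma v))
      (by positivity)
  apply hG.congr'
  filter_upwards [eventually_ge_atTop 1] with n hn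
  have hn0 : (0:ℝ) < (n:ℝ) := by exact_mod_cast hn
  have hAu : (0:ℝ) < ∏ j ∈ Finset.range (n + 1), (u + j) := by
    apply Finset.prod_pos; intro j _; positivity
  have hAu' : (0:ℝ) < ∏ j ∈ Finset.range (n + 1), (u + 1/2 + j) := by
    apply Finset.prod_pos; intro j _; positivity
  have hAv : (0:ℝ) < ∏ j ∈ Finset.range (n + 1), (v + j) := by
    apply Finset.prod_pos; intro j _; positivity
  have hAv' : (0:ℝ) < ∏ j ∈ Finset.range (n + 1), (v + 1/2 + j) := by
    apply Finset.prod_pos; intro j _; positivity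
  have key : Real.GammaSeq (u+1/2) n * Real.GammaSeq (v+1/2) n
      / (Real.GammaSeq u n * Real.GammaSeq v n)
      = (Real.GammaSeq (u+1/2) n / Real.GammaSeq u n)
        * (Real.GammaSeq (v+1/2) n / Real.GammaSeq v n) := by
    rw [mul_div_mul_comm]
  rw [key, gammaSeq_half_ratio hu n hn, gammaSeq_half_ratio hv n hn]
  have hprod : ∏ j ∈ Finset.range (n+1),
      ((u + j) * (v + j) / ((u + 1/2 + j) * (v + 1/2 + j)))
      = ((∏ j ∈ Finset.range (n+1), (u + j)) * (∏ j ∈ Finset.range (n+1), (v + j)))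
        / ((∏ j ∈ Finset.range (n+1), (u + 1/2 + j)) * (∏ j ∈ Finset.range (n+1), (v + 1/2 + j))) := by
    rw [Finset.prod_div_distrib, Finset.prod_mul_distrib, Finset.prod_mul_distrib]
  rw [hprod]
  have hhalf : (n:ℝ) ^ ((1:ℝ)/2) * (n:ℝ) ^ ((1:ℝ)/2) = (n:ℝ) := by
    rw [← Real.rpow_add hn0]
    norm_num
  field_simp
  linear_combination hhalf

lemma Rf_shift {x : ℝ} (hr : 1 / 2 < r) (hx : 0 < x) :
    Rf r (x + 4*r) * (((x+1)/(4*r)) * ((x+2*r-1)/(4*r)))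
      = Rf r x * (((x+1)/(4*r) + 1/2) * ((x+2*r-1)/(4*r) + 1/2)) := by
  have h4r : (0:ℝ) < 4 * r := by linarith
  have h4r' : (4*r : ℝ) ≠ 0 := h4r.ne'
  set u := (x + 1) / (4*r) with hu
  set v := (x + 2*r - 1) / (4*r) with hv
  have hupos : 0 < u := div_pos (by linarith) h4r
  have hvpos : 0 < v := div_pos (by linarith) h4r
  have e1 : (x + 4*r + 2*r + 1) / (4*r) = (u + 1/2) + 1 := by rw [hu]; field_simp; ring
  have e2 : (x + 4*r + 4*r - 1) / (4*r) = (v + 1/2) + 1 := by rw [hv]; field_simp; ring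
  have e3 : (x + 4*r + 1) / (4*r) = u + 1 := by rw [hu]; field_simp; ring
  have e4 : (x + 4*r + 2*r - 1) / (4*r) = v + 1 := by rw [hv]; field_simp; ring
  have e5 : (x + 2*r + 1) / (4*r) = u + 1/2 := by rw [hu]; field_simp; ring
  have e6 : (x + 4*r - 1) / (4*r) = v + 1/2 := by rw [hv]; field_simp; ring
  unfold Rf
  rw [e1, e2, e3, e4, e5, e6,
    Real.Gamma_add_one hupos.ne', Real.Gamma_add_one hvpos.ne',
    Real.Gamma_add_one (by positivity : (u + 1/2) ≠ 0),
    Real.Gamma_add_one (by positivity : (v + 1/2) ≠ 0)]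
  rw [← hu, ← hv]
  have g1 : 0 < Real.Gamma u := Real.Gamma_pos_of_pos hupos
  have g2 : 0 < Real.Gamma v := Real.Gamma_pos_of_pos hvpos
  have g3 : 0 < Real.Gamma (u + 1/2) := Real.Gamma_pos_of_pos (by linarith)
  have g4 : 0 < Real.Gamma (v + 1/2) := Real.Gamma_pos_of_pos (by linarith)
  field_simp

/-- factor sequence -/
noncomputable def Ff (u v : ℝ) (k : ℕ) : ℝ :=
  (u + k) * (v + k) / ((u + 1/2 + k) * (v + 1/2 + k))

lemma Ff_pos {u v : ℝ} (hu : 0 < u) (hv : 0 < v) (k : ℕ) : 0 < Ff u v k := by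
  unfold Ff
  have : (0:ℝ) ≤ (k:ℝ) := Nat.cast_nonneg k
  apply div_pos <;> nlinarith

lemma Rf_prod (hr : 1 / 2 < r) (hs : 0 < s) (N : ℕ) :
    Rf r (s + 4*r*N) * ∏ k ∈ Finset.range N, Ff ((s+1)/(4*r)) ((s+2*r-1)/(4*r)) k
      = Rf r s := by
  have h4r : (0:ℝ) < 4 * r := by linarith
  set u := (s + 1) / (4*r) with hu
  set v := (s + 2*r - 1) / (4*r) with hv
  have hupos : 0 < u := div_pos (by linarith) h4r
  have hvpos : 0 < v := div_pos (by linarith) h4r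
  induction N with
  | zero => simp
  | succ N ih =>
    rw [Finset.prod_range_succ]
    have hxN : (0:ℝ) < s + 4*r*N := by
      have : (0:ℝ) ≤ (N:ℝ) := Nat.cast_nonneg N
      nlinarith
    have eu : ((s + 4*r*N) + 1) / (4*r) = u + N := by rw [hu]; field_simp; ring
    have ev : ((s + 4*r*N) + 2*r - 1) / (4*r) = v + N := by rw [hv]; field_simp; ring
    have hshift := Rf_shift (x := s + 4*r*N) hr hxN
    rw [eu, ev] at hshift
    have hx1 : s + 4*r*(N+1:ℕ) = (s + 4*r*N) + 4*r := by push_cast; ring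
    have hFf : Ff u v N = (u + N) * (v + N) / ((u + 1/2 + N) * (v + 1/2 + N)) := rfl
    have hd : (0:ℝ) < (u + 1/2 + N) * (v + 1/2 + N) := by
      have : (0:ℝ) ≤ (N:ℝ) := Nat.cast_nonneg N
      nlinarith
    have hstep : Rf r ((s + 4*r*N) + 4*r) * Ff u v N = Rf r (s + 4*r*N) := by
      rw [hFf, mul_div_assoc', div_eq_iff hd.ne']
      linear_combination hshift
    rw [hx1]
    calc Rf r ((s + 4*r*N) + 4*r) * ((∏ k ∈ Finset.range N, Ff u v k) * Ff u v N)
        = (Rf r ((s + 4*r*N) + 4*r) * Ff u v N) * ∏ k ∈ Finset.range N, Ff u v k := by ring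
      _ = Rf r (s + 4*r*N) * ∏ k ∈ Finset.range N, Ff u v k := by rw [hstep]
      _ = Rf r s := ih

lemma Rf_ratio_lim (hr : 1 / 2 < r) (hs : 0 < s) :
    Tendsto (fun N : ℕ => (s + 4*r*N) / Rf r (s + 4*r*N)) atTop (nhds 1) := by
  have h4r : (0:ℝ) < 4 * r := by linarith
  set u := (s + 1) / (4*r) with hu
  set v := (s + 2*r - 1) / (4*r) with hv
  have hupos : 0 < u := div_pos (by linarith) h4r
  have hvpos : 0 < v := div_pos (by linarith) h4r
  set G := Real.Gamma (u+1/2) * Real.Gamma (v+1/2) / (Real.Gamma u * Real.Gamma v) with hG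
  have hGpos : 0 < G := by
    have g1 : 0 < Real.Gamma u := Real.Gamma_pos_of_pos hupos
    have g2 : 0 < Real.Gamma v := Real.Gamma_pos_of_pos hvpos
    have g3 : 0 < Real.Gamma (u + 1/2) := Real.Gamma_pos_of_pos (by linarith)
    have g4 : 0 < Real.Gamma (v + 1/2) := Real.Gamma_pos_of_pos (by linarith)
    rw [hG]; positivity
  have hRfG : Rf r s = 4 * r * G := by
    have e5 : (s + 2*r + 1) / (4*r) = u + 1/2 := by rw [hu]; field_simp; ring
    have e6 : (s + 4*r - 1) / (4*r) = v + 1/2 := by rw [hv]; field_simp; ring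
    unfold Rf
    rw [e5, e6, hG, hu, hv]
    ring
  -- the three convergent pieces
  have hAlim : Tendsto (fun N : ℕ => (s + 4*r*N) / N) atTop (nhds (4*r)) := by
    have h1 : Tendsto (fun N : ℕ => s / N + 4*r) atTop (nhds (0 + 4*r)) :=
      (tendsto_const_div_atTop_nhds_zero_nat s).add tendsto_const_nhds
    rw [zero_add] at h1
    apply h1.congr'
    filter_upwards [eventually_ge_atTop 1] with N hN
    have hN0 : ((N:ℝ)) ≠ 0 := by positivity
    field_simp
  have hBlim : Tendsto (fun N : ℕ => Ff u v N) atTop (nhds 1) := by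
    have hden : ∀ w : ℝ, 0 < w → Tendsto (fun N : ℕ => (1:ℝ)/2 / (w + 1/2 + N)) atTop (nhds 0) := by
      intro w hw
      apply Tendsto.div_atTop tendsto_const_nhds
      exact tendsto_atTop_add_const_left _ _ (tendsto_natCast_atTop_atTop (R := ℝ))
    have h1 : Tendsto (fun N : ℕ => (1 - (1:ℝ)/2 / (u + 1/2 + N)) * (1 - (1:ℝ)/2 / (v + 1/2 + N)))
        atTop (nhds ((1 - 0) * (1 - 0))) :=
      ((tendsto_const_nhds.sub (hden u hupos))).mul ((tendsto_const_nhds.sub (hden v hvpos)))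
    norm_num at h1
    apply h1.congr
    intro N
    have hNu : (0:ℝ) < u + 1/2 + N := by positivity
    have hNv : (0:ℝ) < v + 1/2 + N := by positivity
    unfold Ff
    field_simp
    ring
  have hClim : Tendsto (fun N : ℕ => (N:ℝ) * ∏ j ∈ Finset.range (N+1), Ff u v j) atTop (nhds G) := by
    have := gamma_ratio_lim hupos hvpos
    rw [← hG] at this
    exact this
  have hmain : Tendsto (fun N : ℕ =>
      ((s + 4*r*N) / N) * (Ff u v N)⁻¹
        * (((N:ℝ) * ∏ j ∈ Finset.range (N+1), Ff u v j) / Rf r s)) atTop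
      (nhds ((4*r) * (1:ℝ)⁻¹ * (G / Rf r s))) :=
    ((hAlim.mul (hBlim.inv₀ one_ne_zero))).mul (hClim.div_const _)
  have hval : (4*r) * (1:ℝ)⁻¹ * (G / Rf r s) = 1 := by
    rw [hRfG]
    field_simp
  rw [hval] at hmain
  apply hmain.congr'
  filter_upwards [eventually_ge_atTop 1] with N hN
  have hxN : (0:ℝ) < s + 4*r*N := by
    have : (0:ℝ) ≤ (N:ℝ) := Nat.cast_nonneg N
    nlinarith
  have hRfxN : 0 < Rf r (s + 4*r*N) := Rf_pos hr hxN
  have hprod := Rf_prod hr hs N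
  rw [← hu, ← hv] at hprod
  have hP : (0:ℝ) < ∏ k ∈ Finset.range N, Ff u v k :=
    Finset.prod_pos (fun k _ => Ff_pos hupos hvpos k)
  have hFN : (0:ℝ) < Ff u v N := Ff_pos hupos hvpos N
  have hN0 : ((N:ℝ)) ≠ 0 := by positivity
  rw [Finset.prod_range_succ, ← hprod]
  field_simp

lemma cross_eq (hr : 1 / 2 < r) {x : ℝ} (hx : 0 < x) :
    ylim r x * Rf r (x + 4*r) = Rf r x * ylim r (x + 4*r) := by
  have hx2 : 0 < x + 2*r := by linarith
  have h1 : ylim r x * ylim r (x + 2*r) = Rf r x * Rf r (x + 2*r) := by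
    rw [ylim_funct_eq hr hx, Rf_funct_eq hr hx]
  have h2 : ylim r (x + 2*r) * ylim r (x + 4*r) = Rf r (x + 2*r) * Rf r (x + 4*r) := by
    have := ylim_funct_eq (s := x + 2*r) hr hx2
    have h2' := Rf_funct_eq (x := x + 2*r) hr hx2
    rw [show x + 2*r + 2*r = x + 4*r by ring] at this h2'
    rw [this, h2']
  have hy2 : 0 < ylim r (x + 2*r) := ylim_pos hr hx2
  have hR2 : 0 < Rf r (x + 2*r) := Rf_pos hr hx2
  apply mul_right_cancel₀ (b := ylim r (x + 2*r) * Rf r (x + 2*r)) (by positivity)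
  linear_combination (Rf r (x + 2*r) * Rf r (x + 4*r)) * h1 - (Rf r x * Rf r (x + 2*r)) * h2

lemma const_eq (hr : 1 / 2 < r) (hs : 0 < s) (N : ℕ) :
    ylim r s * Rf r (s + 4*r*N) = Rf r s * ylim r (s + 4*r*N) := by
  induction N with
  | zero => push_cast; ring_nf
  | succ N ih =>
    have hxN : (0:ℝ) < s + 4*r*N := by
      have : (0:ℝ) ≤ (N:ℝ) := Nat.cast_nonneg N
      nlinarith
    have hcross := cross_eq hr hxN
    have hyx : 0 < ylim r (s + 4*r*N) := ylim_pos hr hxN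
    have hRx : 0 < Rf r (s + 4*r*N) := Rf_pos hr hxN
    have he : s + 4*r*((N:ℕ)+1:ℕ) = (s + 4*r*N) + 4*r := by push_cast; ring
    rw [he]
    apply mul_right_cancel₀ (b := ylim r (s + 4*r*N) * Rf r (s + 4*r*N)) (by positivity)
    linear_combination (Rf r ((s + 4*r*N) + 4*r) * ylim r (s + 4*r*N)) * ih
      + (Rf r s * ylim r (s + 4*r*N)) * hcross

lemma ylim_eq_Rf (hr : 1 / 2 < r) (hs : 0 < s) : ylim r s = Rf r s := by
  have hxN : ∀ N : ℕ, (0:ℝ) < s + 4*r*N := by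
    intro N
    have : (0:ℝ) ≤ (N:ℝ) := Nat.cast_nonneg N
    nlinarith
  -- x_N → ∞
  have hxT : Tendsto (fun N : ℕ => s + 4*r*(N:ℝ)) atTop atTop :=
    tendsto_atTop_add_const_left _ s
      ((tendsto_natCast_atTop_atTop (R := ℝ)).const_mul_atTop (by linarith : (0:ℝ) < 4*r))
  -- squeeze for y(x_N)/x_N → 1
  have hq : Tendsto (fun N : ℕ => ylim r (s + 4*r*N) / (s + 4*r*N)) atTop (nhds 1) := by
    have hup : Tendsto (fun N : ℕ => 1 + aa r 1 / (2 * ((s + 4*r*N) * (s + 4*r*N))))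
        atTop (nhds (1 + 0)) := by
      apply tendsto_const_nhds.add
      apply Tendsto.div_atTop tendsto_const_nhds
      exact (hxT.atTop_mul_atTop₀ hxT).const_mul_atTop (by norm_num : (0:ℝ) < 2)
    rw [add_zero] at hup
    apply tendsto_of_tendsto_of_tendsto_of_le_of_le (tendsto_const_nhds : Tendsto (fun _ : ℕ => (1:ℝ)) atTop (nhds 1)) hup
    · intro N
      have h1 := (ylim_spec (s := s + 4*r*N) hr (hxN N)).2.1
      rw [le_div_iff₀ (hxN N)]
      simpa using h1
    · intro N
      have h2 := (ylim_spec (s := s + 4*r*N) hr (hxN N)).2.2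
      rw [div_le_iff₀ (hxN N)]
      have hx := hxN N
      have ha1 := aa_pos hr (n := 1) le_rfl
      calc ylim r (s + 4*r*N) ≤ (s + 4*r*N) + aa r 1 / (2 * (s + 4*r*N)) := h2
        _ = (1 + aa r 1 / (2 * ((s + 4*r*N) * (s + 4*r*N)))) * (s + 4*r*N) := by
            field_simp
  have hw := Rf_ratio_lim hr hs
  have hRs : 0 < Rf r s := Rf_pos hr hs
  have htends : Tendsto (fun N : ℕ => Rf r s *
      (ylim r (s + 4*r*N) / (s + 4*r*N) * ((s + 4*r*N) / Rf r (s + 4*r*N))))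
      atTop (nhds (Rf r s * (1 * 1))) :=
    tendsto_const_nhds.mul (hq.mul hw)
  have hconst : ∀ N : ℕ, ylim r s = Rf r s *
      (ylim r (s + 4*r*N) / (s + 4*r*N) * ((s + 4*r*N) / Rf r (s + 4*r*N))) := by
    intro N
    have hx := hxN N
    have hRx : 0 < Rf r (s + 4*r*N) := Rf_pos hr hx
    have hc := const_eq hr hs N
    field_simp
    linear_combination hc
  have : Tendsto (fun _ : ℕ => ylim r s) atTop (nhds (Rf r s * (1 * 1))) := by
    apply htends.congr
    intro N
    exact (hconst N).symm
  have := tendsto_nhds_unique this tendsto_const_nhds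
  rw [← this]
  ring

theorem main (s r : ℝ) (hs : 0 < s) (hr : 1 / 2 < r) :
    IsCFLimit s (fun n => (2 * (n : ℝ) - 1) ^ 2 * r ^ 2 - (r - 1) ^ 2) (fun _ => 2 * s)
      (4 * r * (Real.Gamma ((s + 2*r + 1) / (4*r)) * Real.Gamma ((s + 4*r - 1) / (4*r))) /
        (Real.Gamma ((s + 1) / (4*r)) * Real.Gamma ((s + 2*r - 1) / (4*r)))) := by
  have h := (ylim_spec hr hs).1
  rw [ylim_eq_Rf hr hs] at h
  exact h

end RamB

theorem ramanujan_generalized_brouncker (s r : ℝ) (hs : 0 < s) (hr : 1 / 2 < r) :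
    IsCFLimit s (fun n => (2 * (n : ℝ) - 1) ^ 2 * r ^ 2 - (r - 1) ^ 2) (fun _ => 2 * s)
      (4 * r * (Real.Gamma ((s + 2*r + 1) / (4*r)) * Real.Gamma ((s + 4*r - 1) / (4*r))) /
        (Real.Gamma ((s + 1) / (4*r)) * Real.Gamma ((s + 2*r - 1) / (4*r)))) :=
  RamB.main s r hs hr
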